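/- Let Σ ⊆ {T, B, 4, D}. Fix h and n. For every modal formula φ ∈ L_{h,n} and every canonical formula α ∈ C_{h,n}, either ⊢_{KΣ} α→φ or ⊢_{KΣ} α→¬φ. -/

import Mathlib

namespace ModalSOA

/-- Modal formulas: propositional variables, propositional constants, ⊥, →, □. -/
inductive Formula : Type
  | var : ℕ → Formula
  | const : ℕ → Formula
  | bot : Formula
  | imp : Formula → Formula → Formula
  | box : Formula → Formula
deriving DecidableEq

namespace Formula

/-- ¬φ := φ → ⊥ -/
def neg (φ : Formula) : Formula := φ.imp bot

/-- ⊤ := ¬⊥ -/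
def top : Formula := bot.neg

/-- ◇φ := ¬□¬φ -/
def dia (φ : Formula) : Formula := φ.neg.box.neg

/-- φ ∧ ψ := ¬(φ → ¬ψ) -/
def and (φ ψ : Formula) : Formula := (φ.imp ψ.neg).neg

/-- φ ∨ ψ := ¬φ → ψ -/
def or (φ ψ : Formula) : Formula := φ.neg.imp ψ

/-- Uniform substitution: substitute formulas for propositional variables,
    leaving propositional constants fixed. -/
def subst (σ : ℕ → Formula) : Formula → Formula
  | var n => σ n
  | const n => const n
  | bot => bot
  | imp φ ψ => imp (φ.subst σ) (ψ.subst σ)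
  | box φ => box (φ.subst σ)

end Formula

open Formula

/-- The propositional variable p. -/
def pv : Formula := .var 0
/-- The propositional variable q. -/
def qv : Formula := .var 1
/-- The propositional variable r. -/
def rv : Formula := .var 2

/-- The seven extra modal axioms considered: T, B, 4, 5, D, .2, L. -/
inductive ModalAxiom : Type
  | T | B | four | five | D | dot2 | L
deriving DecidableEq

/-- The modal formula corresponding to each axiom name. -/
def ModalAxiom.fml : ModalAxiom → Formula
  | .T => pv.box.imp pv                       -- □p → p
  | .B => pv.imp pv.dia.box                   -- p → □◇p
  | .four => pv.box.imp pv.box.box            -- □p → □□p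
  | .five => pv.dia.imp pv.dia.box            -- ◇p → □◇p
  | .D => pv.box.imp pv.dia                   -- □p → ◇p
  | .dot2 => pv.box.dia.imp pv.dia.box        -- ◇□p → □◇p
  | .L => (pv.box.imp pv).box.imp pv.box      -- □(□p→p) → □p

/-- Hilbert-style provability for the normal modal logic with extra axioms `Ax`:
classical propositional axioms, K, members of `Ax`, modus ponens, necessitation,
and uniform substitution. -/
inductive Prv (Ax : Set Formula) : Formula → Prop
  | ax1 : Prv Ax (pv.imp (qv.imp pv))
  | ax2 : Prv Ax ((pv.imp (qv.imp rv)).imp ((pv.imp qv).imp (pv.imp rv)))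
  | ax3 : Prv Ax ((pv.neg.imp qv.neg).imp (qv.imp pv))
  | axK : Prv Ax ((pv.imp qv).box.imp (pv.box.imp qv.box))
  | extra {φ} : φ ∈ Ax → Prv Ax φ
  | mp {φ ψ} : Prv Ax (φ.imp ψ) → Prv Ax φ → Prv Ax ψ
  | nec {φ} : Prv Ax φ → Prv Ax φ.box
  | subst {φ} (σ : ℕ → Formula) : Prv Ax φ → Prv Ax (φ.subst σ)

/-- The axiom set of the logic KΣ. -/
def KAxioms (Sig : Set ModalAxiom) : Set Formula := ModalAxiom.fml '' Sig

/-- The axiom set of GL = K{L}. -/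
def GLAx : Set Formula := KAxioms {ModalAxiom.L}

/-- Conjunction of a list of formulas (empty conjunction is ⊤). -/
def listConj : List Formula → Formula
  | [] => top
  | [φ] => φ
  | φ :: ψ :: l => φ.and (listConj (ψ :: l))

/-- Disjunction of a list of formulas (empty disjunction is ⊥). -/
def listDisj : List Formula → Formula
  | [] => bot
  | [φ] => φ
  | φ :: ψ :: l => φ.or (listDisj (ψ :: l))

/-- Pbl(Γ, φ): there are ψ₁,…,ψₙ ∈ Γ with ⊢ (ψ₁∧…∧ψₙ) → φ. -/
def Pbl (Ax : Set Formula) (Γ : Set Formula) (φ : Formula) : Prop :=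
  ∃ l : List Formula, (∀ ψ ∈ l, ψ ∈ Γ) ∧ Prv Ax ((listConj l).imp φ)

/-- A formula φ is consistent if ⊬ φ → ⊥. -/
def FmlConsistent (Ax : Set Formula) (φ : Formula) : Prop := ¬ Prv Ax (φ.imp bot)

/-- A set Γ is consistent if ¬Pbl(Γ, ⊥). -/
def SetConsistent (Ax : Set Formula) (Γ : Set Formula) : Prop := ¬ Pbl Ax Γ bot

/-- Γ is maximally consistent: consistent, closed under deduction, and for
every φ, φ ∈ Γ or ¬φ ∈ Γ. -/
def MaxConsistent (Ax : Set Formula) (Γ : Set Formula) : Prop :=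
  SetConsistent Ax Γ ∧ (∀ φ, Pbl Ax Γ φ → φ ∈ Γ) ∧ (∀ φ, φ ∈ Γ ∨ φ.neg ∈ Γ)

/-- Euclidean relation. -/
def Euclidean {W : Type*} (R : W → W → Prop) : Prop := ∀ ⦃x y z⦄, R x y → R x z → R y z

/-- Serial relation. -/
def Serial {W : Type*} (R : W → W → Prop) : Prop := ∀ x, ∃ y, R x y

/-- Directed relation. -/
def Directed {W : Type*} (R : W → W → Prop) : Prop :=
  ∀ ⦃x y z⦄, R x y → R x z → ∃ s, R y s ∧ R z s

/-- No infinite ascending R-sequence. -/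
def NoInfiniteAscent {W : Type*} (R : W → W → Prop) : Prop :=
  ¬ ∃ f : ℕ → W, ∀ n, R (f n) (f (n + 1))

/-- A frame (with relation R) is appropriate to a given modal axiom. -/
def AppropriateTo {W : Type*} (R : W → W → Prop) : ModalAxiom → Prop
  | .T => Reflexive R
  | .B => Symmetric R
  | .four => Transitive R
  | .five => Euclidean R
  | .D => Serial R
  | .dot2 => Directed R
  | .L => Transitive R ∧ NoInfiniteAscent R

/-- A frame is appropriate to Σ if it is appropriate to each member of Σ. -/
def Appropriate {W : Type*} (R : W → W → Prop) (Sig : Set ModalAxiom) : Prop :=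
  ∀ a ∈ Sig, AppropriateTo R a

/-- A valuation on a frame: truth values for all formulas, respecting the
Kripke clauses for ⊥, →, □. -/
structure Valuation {W : Type*} (R : W → W → Prop) where
  val : W → Formula → Bool
  val_bot : ∀ w, val w Formula.bot = false
  val_imp : ∀ w φ ψ, val w (φ.imp ψ) = (!(val w φ) || val w ψ)
  val_box : ∀ w φ, val w φ.box = true ↔ ∀ v, R w v → val v φ = true

/-- F ⊩ φ : every valuation on the frame makes φ true at every world. -/
def FrameForces {W : Type*} (R : W → W → Prop) (φ : Formula) : Prop :=
  ∀ V : Valuation R, ∀ w : W, V.val w φ = true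

/-- Height of a formula. -/
def ht : Formula → ℕ
  | .imp φ ψ => max (ht φ) (ht ψ)
  | .box φ => 1 + ht φ
  | _ => 0

/-- Order of a formula, with respect to the fixed enumeration `atom` of
atomic formulas. -/
def ord : Formula → ℕ
  | .bot => 0
  | .var k => 2 * k + 1
  | .const k => 2 * k + 2
  | .imp φ ψ => max (ord φ) (ord ψ)
  | .box φ => ord φ

/-- A fixed enumeration p₀, p₁, … of the atomic formulas (⊥, variables and
constants), with `ord (atom n) = n`. -/
def atom : ℕ → Formula
  | 0 => .bot
  | n + 1 => if n % 2 = 0 then .var (n / 2) else .const (n / 2)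

/-- φ ∈ L_{h,n}. -/
def InL (h n : ℕ) (φ : Formula) : Prop := ht φ ≤ h ∧ ord φ ≤ n

/-- T̂ for T ⊆ {p₀,…,pₙ}: the conjunction of the atoms in T and the negations
of the remaining atoms among p₀,…,pₙ. -/
def hatT (n : ℕ) (T : List ℕ) : Formula :=
  listConj ((List.range (n + 1)).map (fun i => if i ∈ T then atom i else (atom i).neg))

/-- The canonical formula α_{S,T} = (∧_{ψ∈S} ◇ψ) ∧ □(∨S) ∧ T̂. -/
def canonAlpha (n : ℕ) (S : List Formula) (T : List ℕ) : Formula :=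
  (listConj (S.map dia)).and (((listDisj S).box).and (hatT n T))

/-- The canonical formulas C_{h,n} (as a finite list). -/
def C : ℕ → ℕ → List Formula
  | 0, n => (List.range (n + 1)).sublists.map (hatT n)
  | h + 1, n => (C h n).sublists.flatMap
      (fun S => (List.range (n + 1)).sublists.map (fun T => canonAlpha n S T))

/-- ⊕X := ∨_{α∈X}(α ∧ ∧_{β∈X\{α}} ¬β). -/
def bigOplus (X : List Formula) : Formula :=
  listDisj (X.map (fun α => α.and (listConj ((X.filter (· ≠ α)).map neg))))

/-- The set of subformulas of a formula. -/
def sub : Formula → Finset Formula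
  | .imp φ ψ => insert (Formula.imp φ ψ) (sub φ ∪ sub ψ)
  | .box φ => insert φ.box (sub φ)
  | a => {a}

/-- (W, R, V) is a weak Kripke model of φ: W nonempty and V satisfies the
valuation clauses for ⊥, →, □ on the subformulas of φ. -/
structure IsWeakKripkeModel (φ : Formula) {W : Type*} (R : W → W → Prop)
    (V : W → Formula → Bool) : Prop where
  nonempty : Nonempty W
  val_bot : ∀ w, Formula.bot ∈ sub φ → V w Formula.bot = false
  val_imp : ∀ w ψ θ, ψ.imp θ ∈ sub φ → V w (ψ.imp θ) = (!(V w ψ) || V w θ)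
  val_box : ∀ w ψ, ψ.box ∈ sub φ → (V w ψ.box = true ↔ ∀ v, R w v → V v ψ = true)

/-- W̃ : the KΣ-consistent α ∈ C_{h+1,n} with ⊢ α → φ. -/
def tildeW (Ax : Set Formula) (φ : Formula) (h n : ℕ) : Set Formula :=
  {α | α ∈ C (h + 1) n ∧ FmlConsistent Ax α ∧ Prv Ax (α.imp φ)}

/-- α →c β iff α ∧ ◇β is consistent. -/
def relC (Ax : Set Formula) (α β : Formula) : Prop := FmlConsistent Ax (α.and β.dia)

/-- Ṽ(α, ψ) = 1 iff ⊢ α → ψ. -/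
noncomputable def tildeV (Ax : Set Formula) (α ψ : Formula) : Bool :=
  @decide _ (Classical.propDecidable (Prv Ax (α.imp ψ)))

-- α′ : the unique consistent member of C_{h,n} provably implied by α.
open Classical in
noncomputable def prime (Ax : Set Formula) (h n : ℕ) (α : Formula) : Formula :=
  if hx : ∃ α', α' ∈ C h n ∧ FmlConsistent Ax α' ∧ Prv Ax (α.imp α') then hx.choose
  else Formula.bot

/-- α →m β iff ⊢ α → ◇β′ and every ξ ∈ C_{h,n} with ⊢ β → ◇ξ satisfies ⊢ α → ◇ξ. -/
def relM (Ax : Set Formula) (h n : ℕ) (α β : Formula) : Prop :=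
  Prv Ax (α.imp (prime Ax h n β).dia) ∧
  ∀ ξ ∈ C h n, Prv Ax (β.imp ξ.dia) → Prv Ax (α.imp ξ.dia)

/-- α →d β (for GL) iff α →m β and some γ ∈ C_{h,n} has ⊢ α → ◇γ and ⊢ β → □¬γ. -/
def relD (h n : ℕ) (α β : Formula) : Prop :=
  relM GLAx h n α β ∧
  ∃ γ ∈ C h n, Prv GLAx (α.imp γ.dia) ∧ Prv GLAx (β.imp γ.neg.box)


/-! ### Auxiliary Hilbert-system machinery -/

section Machinery

variable {Ax : Set Formula}

/-- Axiom scheme 1 instance. -/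
theorem prv_a1 (φ ψ : Formula) : Prv Ax (φ.imp (ψ.imp φ)) := by
  have h := (Prv.ax1 : Prv Ax _).subst (fun n => if n = 0 then φ else ψ)
  simpa [pv, qv, Formula.subst] using h

/-- Axiom scheme 2 instance. -/
theorem prv_a2 (φ ψ χ : Formula) :
    Prv Ax ((φ.imp (ψ.imp χ)).imp ((φ.imp ψ).imp (φ.imp χ))) := by
  have h := (Prv.ax2 : Prv Ax _).subst
    (fun n => if n = 0 then φ else if n = 1 then ψ else χ)
  simpa [pv, qv, rv, Formula.subst] using h

/-- Axiom scheme 3 instance. -/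
theorem prv_a3 (φ ψ : Formula) :
    Prv Ax ((φ.neg.imp ψ.neg).imp (ψ.imp φ)) := by
  have h := (Prv.ax3 : Prv Ax _).subst (fun n => if n = 0 then φ else ψ)
  simpa [pv, qv, Formula.subst, Formula.neg] using h

/-- Axiom K instance. -/
theorem prv_k (φ ψ : Formula) :
    Prv Ax ((φ.imp ψ).box.imp (φ.box.imp ψ.box)) := by
  have h := (Prv.axK : Prv Ax _).subst (fun n => if n = 0 then φ else ψ)
  simpa [pv, qv, Formula.subst] using h

theorem prv_id (φ : Formula) : Prv Ax (φ.imp φ) :=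
  ((prv_a2 φ (φ.imp φ) φ).mp (prv_a1 φ (φ.imp φ))).mp (prv_a1 φ φ)

/-- Derivations from a list of hypotheses. -/
inductive Der (Ax : Set Formula) : List Formula → Formula → Prop
  | hyp {Γ φ} : φ ∈ Γ → Der Ax Γ φ
  | thm {Γ φ} : Prv Ax φ → Der Ax Γ φ
  | mp {Γ φ ψ} : Der Ax Γ (φ.imp ψ) → Der Ax Γ φ → Der Ax Γ ψ

/-- Hypothesis rule with the formula explicit. -/
theorem dh {Γ : List Formula} (φ : Formula) (h : φ ∈ Γ) : Der Ax Γ φ :=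
  Der.hyp h

private theorem Der.ded_aux {Δ : List Formula} {φ : Formula}
    (h : Der Ax Δ φ) : ∀ ψ Γ, Δ = ψ :: Γ → Der Ax Γ (ψ.imp φ) := by
  induction h with
  | hyp hm =>
    intro ψ Γ hEq
    subst hEq
    rcases List.mem_cons.1 hm with rfl | hm
    · exact Der.thm (prv_id _)
    · exact (Der.thm (prv_a1 _ _)).mp (Der.hyp hm)
  | thm h => exact fun ψ Γ _ => (Der.thm (prv_a1 _ _)).mp (Der.thm h)
  | mp _ _ ih1 ih2 =>
    intro ψ Γ hEq
    exact ((Der.thm (prv_a2 _ _ _)).mp (ih1 ψ Γ hEq)).mp (ih2 ψ Γ hEq)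

/-- Deduction theorem. -/
theorem Der.ded {Γ : List Formula} {ψ φ : Formula}
    (h : Der Ax (ψ :: Γ) φ) : Der Ax Γ (ψ.imp φ) :=
  Der.ded_aux h ψ Γ rfl

theorem Der.toPrv {φ : Formula} (h : Der Ax [] φ) : Prv Ax φ := by
  induction h with
  | hyp h => simp at h
  | thm h => exact h
  | mp _ _ ih1 ih2 => exact ih1.mp ih2

/-- `⊢ φ → ¬¬φ`. -/
theorem prv_dni (φ : Formula) : Prv Ax (φ.imp φ.neg.neg) :=
  Der.toPrv <| Der.ded <| Der.ded <|
    (dh φ.neg (by simp)).mp (dh φ (by simp))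

/-- `⊢ ¬¬φ → φ`. -/
theorem prv_dne (φ : Formula) : Prv Ax (φ.neg.neg.imp φ) :=
  (prv_a3 φ φ.neg.neg).mp (prv_dni φ.neg)

theorem prv_trans {φ ψ χ : Formula} (h1 : Prv Ax (φ.imp ψ))
    (h2 : Prv Ax (ψ.imp χ)) : Prv Ax (φ.imp χ) :=
  Der.toPrv <| Der.ded <|
    (Der.thm h2).mp ((Der.thm h1).mp (dh φ (by simp)))

theorem prv_mp2 {α φ ψ : Formula} (h1 : Prv Ax (α.imp (φ.imp ψ)))
    (h2 : Prv Ax (α.imp φ)) : Prv Ax (α.imp ψ) :=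
  ((prv_a2 α φ ψ).mp h1).mp h2

/-- `⊢ (φ→ψ) → (¬ψ→¬φ)`. -/
theorem prv_contra (φ ψ : Formula) :
    Prv Ax ((φ.imp ψ).imp (ψ.neg.imp φ.neg)) :=
  Der.toPrv <| Der.ded <| Der.ded <| Der.ded <|
    (dh ψ.neg (by simp)).mp
      ((dh (φ.imp ψ) (by simp)).mp (dh φ (by simp)))

theorem prv_contrapose {φ ψ : Formula} (h : Prv Ax (φ.imp ψ)) :
    Prv Ax (ψ.neg.imp φ.neg) := (prv_contra φ ψ).mp h

/-- `⊢ ⊥ → φ`. -/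
theorem prv_exfalso (φ : Formula) : Prv Ax (Formula.bot.imp φ) :=
  (prv_a3 φ Formula.bot).mp ((prv_a1 _ _).mp (prv_id Formula.bot))

/-- `⊢ (φ→χ) → ((¬φ→χ) → χ)`. -/
theorem prv_cases (φ χ : Formula) :
    Prv Ax ((φ.imp χ).imp ((φ.neg.imp χ).imp χ)) := by
  apply Der.toPrv; apply Der.ded; apply Der.ded
  have hnφ : Der Ax [χ.neg, φ.neg.imp χ, φ.imp χ] φ.neg :=
    Der.ded <| (dh χ.neg (by simp)).mp
      ((dh (φ.imp χ) (by simp)).mp (dh φ (by simp)))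
  have hbot : Der Ax [χ.neg, φ.neg.imp χ, φ.imp χ] Formula.bot :=
    (dh χ.neg (by simp)).mp ((dh (φ.neg.imp χ) (by simp)).mp hnφ)
  exact (Der.thm (prv_dne χ)).mp (Der.ded hbot)

/-- `⊢ φ → ψ → φ∧ψ`. -/
theorem prv_and_intro (φ ψ : Formula) :
    Prv Ax (φ.imp (ψ.imp (φ.and ψ))) :=
  Der.toPrv <| Der.ded <| Der.ded <| Der.ded <|
    ((dh (φ.imp ψ.neg) (by simp)).mp (dh φ (by simp))).mp
      (dh ψ (by simp))

/-- `⊢ φ∧ψ → φ`. -/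
theorem prv_and_left (φ ψ : Formula) : Prv Ax ((φ.and ψ).imp φ) := by
  have h1 : Prv Ax (φ.neg.imp (φ.imp ψ.neg)) :=
    Der.toPrv <| Der.ded <| Der.ded <|
      (Der.thm (prv_exfalso ψ.neg)).mp
        ((dh φ.neg (by simp)).mp (dh φ (by simp)))
  exact prv_trans (prv_contrapose h1) (prv_dne φ)

/-- `⊢ φ∧ψ → ψ`. -/
theorem prv_and_right (φ ψ : Formula) : Prv Ax ((φ.and ψ).imp ψ) :=
  prv_trans (prv_contrapose (prv_a1 ψ.neg φ)) (prv_dne ψ)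

/-- `⊢ φ → φ∨ψ`. -/
theorem prv_or_inl (φ ψ : Formula) : Prv Ax (φ.imp (φ.or ψ)) :=
  Der.toPrv <| Der.ded <| Der.ded <|
    (Der.thm (prv_exfalso ψ)).mp
      ((dh φ.neg (by simp)).mp (dh φ (by simp)))

/-- `⊢ ψ → φ∨ψ`. -/
theorem prv_or_inr (φ ψ : Formula) : Prv Ax (ψ.imp (φ.or ψ)) :=
  prv_a1 ψ φ.neg

/-- or-elimination. -/
theorem prv_or_elim {φ ψ χ : Formula} (h1 : Prv Ax (φ.imp χ))
    (h2 : Prv Ax (ψ.imp χ)) : Prv Ax ((φ.or ψ).imp χ) := by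
  have h3 : Prv Ax (φ.neg.imp ((φ.or ψ).imp χ)) :=
    Der.toPrv <| Der.ded <| Der.ded <| (Der.thm h2).mp <|
      (dh (φ.neg.imp ψ) (by simp [Formula.or])).mp (dh φ.neg (by simp))
  have h4 : Prv Ax (φ.imp ((φ.or ψ).imp χ)) :=
    Der.toPrv <| Der.ded <| Der.ded <|
      (Der.thm h1).mp (dh φ (by simp))
  exact ((prv_cases φ ((φ.or ψ).imp χ)).mp h4).mp h3

/-- Box monotonicity. -/
theorem prv_box_mono {φ ψ : Formula} (h : Prv Ax (φ.imp ψ)) :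
    Prv Ax (φ.box.imp ψ.box) := (prv_k φ ψ).mp h.nec

/-- Membership in a list conjunction. -/
theorem prv_listConj_elim {l : List Formula} {ψ : Formula} (h : ψ ∈ l) :
    Prv Ax ((listConj l).imp ψ) := by
  match l, h with
  | [φ], h =>
    rcases List.mem_singleton.1 h with rfl
    exact prv_id ψ
  | φ :: χ :: l, h =>
    rcases List.mem_cons.1 h with rfl | h
    · exact prv_and_left _ _
    · exact prv_trans (prv_and_right φ _) (prv_listConj_elim h)

/-- Introduction of a list disjunction. -/
theorem prv_listDisj_intro {l : List Formula} {ψ : Formula} (h : ψ ∈ l) :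
    Prv Ax (ψ.imp (listDisj l)) := by
  match l, h with
  | [φ], h =>
    rcases List.mem_singleton.1 h with rfl
    exact prv_id ψ
  | φ :: χ :: l, h =>
    rcases List.mem_cons.1 h with rfl | h
    · exact prv_or_inl _ _
    · exact prv_trans (prv_listDisj_intro h) (prv_or_inr _ _)

/-- Elimination of a list disjunction. -/
theorem prv_listDisj_elim {l : List Formula} {χ : Formula}
    (h : ∀ ψ ∈ l, Prv Ax (ψ.imp χ)) : Prv Ax ((listDisj l).imp χ) := by
  match l with
  | [] => exact prv_exfalso χ
  | [φ] => exact h φ (by simp)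
  | φ :: ψ :: l =>
    exact prv_or_elim (h φ (by simp))
      (prv_listDisj_elim (fun θ hθ => h θ (List.mem_cons_of_mem _ hθ)))

end Machinery

/-! ### Structure of canonical formulas -/

theorem mem_C_zero {n : ℕ} {α : Formula} (h : α ∈ C 0 n) :
    ∃ T : List ℕ, α = hatT n T := by
  simp only [C, List.mem_map] at h
  obtain ⟨T, _, rfl⟩ := h
  exact ⟨T, rfl⟩

theorem mem_C_succ {h n : ℕ} {α : Formula} (hα : α ∈ C (h + 1) n) :
    ∃ S T, (∀ β ∈ S, β ∈ C h n) ∧ α = canonAlpha n S T := by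
  simp only [C, List.mem_flatMap, List.mem_map, List.mem_sublists] at hα
  obtain ⟨S, hS, T, _, rfl⟩ := hα
  exact ⟨S, T, fun β hβ => hS.mem hβ, rfl⟩

/-- T̂ decides every atom of index ≤ n. -/
theorem hatT_decides {Ax : Set Formula} (n : ℕ) (T : List ℕ) {i : ℕ}
    (hi : i ≤ n) :
    Prv Ax ((hatT n T).imp (atom i)) ∨ Prv Ax ((hatT n T).imp (atom i).neg) := by
  have hmem : (if i ∈ T then atom i else (atom i).neg) ∈
      (List.range (n + 1)).map
        (fun i => if i ∈ T then atom i else (atom i).neg) :=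
    List.mem_map.2 ⟨i, List.mem_range.2 (Nat.lt_succ_of_le hi), rfl⟩
  by_cases hT : i ∈ T
  · left; have hc : Prv Ax ((hatT n T).imp (if i ∈ T then atom i else (atom i).neg)) :=
      prv_listConj_elim (Ax := Ax) hmem
    simpa [hT] using hc
  · right; have hc : Prv Ax ((hatT n T).imp (if i ∈ T then atom i else (atom i).neg)) :=
      prv_listConj_elim (Ax := Ax) hmem
    simpa [hT] using hc

/-- Every canonical formula decides every atom of index ≤ n. -/
theorem C_decides_atom {Ax : Set Formula} {h n : ℕ} {α : Formula}
    (hα : α ∈ C h n) {i : ℕ} (hi : i ≤ n) :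
    Prv Ax (α.imp (atom i)) ∨ Prv Ax (α.imp (atom i).neg) := by
  match h with
  | 0 =>
    obtain ⟨T, rfl⟩ := mem_C_zero hα
    exact hatT_decides n T hi
  | h + 1 =>
    obtain ⟨S, T, _, rfl⟩ := mem_C_succ hα
    have hhat : Prv Ax ((canonAlpha n S T).imp (hatT n T)) :=
      prv_trans (prv_and_right _ _) (prv_and_right _ _)
    rcases hatT_decides (Ax := Ax) n T hi with h1 | h1
    · exact Or.inl (prv_trans hhat h1)
    · exact Or.inr (prv_trans hhat h1)

theorem canonAlpha_dia {Ax : Set Formula} {n : ℕ} {S : List Formula}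
    {T : List ℕ} {β : Formula} (hβ : β ∈ S) :
    Prv Ax ((canonAlpha n S T).imp β.dia) :=
  prv_trans (prv_and_left _ _)
    (prv_listConj_elim (List.mem_map.2 ⟨β, hβ, rfl⟩))

theorem canonAlpha_box {Ax : Set Formula} {n : ℕ} {S : List Formula}
    {T : List ℕ} :
    Prv Ax ((canonAlpha n S T).imp (listDisj S).box) :=
  prv_trans (prv_and_right _ _) (prv_and_left _ _)

/-- Main lemma: every canonical formula in `C h n` decides every formula
in `L_{h,n}`, over any normal modal logic. -/
theorem C_decides {Ax : Set Formula} (φ : Formula) :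
    ∀ (h n : ℕ) (α : Formula), α ∈ C h n → InL h n φ →
      Prv Ax (α.imp φ) ∨ Prv Ax (α.imp φ.neg) := by
  induction φ with
  | var k =>
    intro h n α hα hφ
    have hk : 2 * k + 1 ≤ n := hφ.2
    have hatom : atom (2 * k + 1) = Formula.var k := by
      simp [atom, Nat.mul_mod_right, Nat.mul_div_cancel_left]
    rw [← hatom]
    exact C_decides_atom hα hk
  | const k =>
    intro h n α hα hφ
    have hk : 2 * k + 2 ≤ n := hφ.2
    have hatom : atom (2 * k + 2) = Formula.const k := by
      have h1 : (2 * k + 1) % 2 = 1 := by omega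
      have h2 : (2 * k + 1) / 2 = k := by omega
      simp [atom, h1, h2]
    rw [← hatom]
    exact C_decides_atom hα hk
  | bot =>
    intro h n α hα hφ
    right
    exact (prv_a1 _ _).mp (prv_id Formula.bot)
  | imp φ ψ ihφ ihψ =>
    intro h n α hα hφmem
    obtain ⟨hh, ho⟩ := hφmem
    have hφ' : InL h n φ := ⟨le_trans (le_max_left _ _) hh,
      le_trans (le_max_left _ _) ho⟩
    have hψ' : InL h n ψ := ⟨le_trans (le_max_right _ _) hh,
      le_trans (le_max_right _ _) ho⟩
    rcases ihψ h n α hα hψ' with h1 | h1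
    · left; exact prv_trans h1 (prv_a1 ψ φ)
    · rcases ihφ h n α hα hφ' with h2 | h2
      · right
        have key : Prv Ax (φ.imp (ψ.neg.imp (φ.imp ψ).neg)) :=
          Der.toPrv <| Der.ded <| Der.ded <| Der.ded <|
            (dh ψ.neg (by simp)).mp
              ((dh (φ.imp ψ) (by simp)).mp (dh φ (by simp)))
        exact prv_mp2 (prv_trans h2 key) h1
      · left
        have key : Prv Ax (φ.neg.imp (φ.imp ψ)) :=
          Der.toPrv <| Der.ded <| Der.ded <|
            (Der.thm (prv_exfalso ψ)).mp
              ((dh φ.neg (by simp)).mp (dh φ (by simp)))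
        exact prv_trans h2 key
  | box ψ ihψ =>
    intro h n α hα hφmem
    obtain ⟨hh, ho⟩ := hφmem
    match h, hh with
    | 0, hh => exact absurd hh (by simp [ht])
    | h + 1, hh =>
      have hψh : ht ψ ≤ h := by
        have : 1 + ht ψ ≤ h + 1 := hh
        omega
      obtain ⟨S, T, hS, rfl⟩ := mem_C_succ hα
      by_cases hall : ∀ β ∈ S, Prv Ax (β.imp ψ)
      · left
        exact prv_trans canonAlpha_box (prv_box_mono (prv_listDisj_elim hall))
      · right
        push_neg at hall
        obtain ⟨β, hβS, hβ⟩ := hall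
        rcases ihψ h n β (hS β hβS) ⟨hψh, ho⟩ with h1 | h1
        · exact absurd h1 hβ
        · have h2 : Prv Ax (ψ.imp β.neg) :=
            Der.toPrv <| Der.ded <| Der.ded <|
              ((Der.thm h1).mp (dh β (by simp))).mp (dh ψ (by simp))
          have h4 : Prv Ax (β.dia.imp ψ.box.neg) :=
            prv_contrapose (prv_box_mono h2)
          exact prv_trans (canonAlpha_dia hβS) h4
/-- For Σ ⊆ {T,B,4,D}, φ ∈ L_{h,n} and α ∈ C_{h,n}, either
⊢ α→φ or ⊢ α→¬φ. -/
theorem canonical_decides (Sig : Set ModalAxiom)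
    (hSig : Sig ⊆ {ModalAxiom.T, ModalAxiom.B, ModalAxiom.four, ModalAxiom.D})
    (h n : ℕ) (φ : Formula) (hφ : InL h n φ) (α : Formula) (hα : α ∈ C h n) :
    Prv (KAxioms Sig) (α.imp φ) ∨ Prv (KAxioms Sig) (α.imp φ.neg) :=
  C_decides φ h n α hα hφ

end ModalSOA
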